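/- Let r ≥ 1 be an integer, let z ∈ (0,1), and let x_1,…,x_r be the points x_i = (√(1−z²)·cos(2πi/r), √(1−z²)·sin(2πi/r), z) on the unit sphere. Then −2·Σ_{i=1}^{r} Σ_{k=1}^{r} log ‖x_i + x_k‖ = −2·r²·log(1+z) − 2·r·log(1 − ((z−1)/(z+1))^r). -/

import Mathlib

open scoped Real

noncomputable section

/-- Points of `ℝ³`. -/
abbrev Esp := EuclideanSpace ℝ (Fin 3)

/-- The point of `S²` at height `z` and longitude `θ`. -/
def sphPt (z θ : ℝ) : Esp :=
  WithLp.toLp 2 ![Real.sqrt (1 - z^2) * Real.cos θ, Real.sqrt (1 - z^2) * Real.sin θ, z]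

lemma prod_roots_unity (n : ℕ) (hn : 0 < n) (Y : ℂ) :
    ∏ j ∈ Finset.range n, (Y - Complex.exp (2 * π * Complex.I / n) ^ j) = Y ^ n - 1 := by
  have hζ := Complex.isPrimitiveRoot_exp n hn.ne'
  have hpoly := Polynomial.X_pow_sub_one_eq_prod hn hζ
  have h := congrArg (Polynomial.eval Y) hpoly
  simp only [Polynomial.eval_sub, Polynomial.eval_pow, Polynomial.eval_X, Polynomial.eval_one,
    Polynomial.eval_prod, Polynomial.eval_C] at h
  rw [h]
  have : NeZero n := ⟨hn.ne'⟩
  refine Finset.prod_nbij (fun j => Complex.exp (2 * π * Complex.I / n) ^ j) ?_ ?_ ?_ ?_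
  · intro j _
    refine (Polynomial.mem_nthRootsFinset hn (1:ℂ)).2 ?_
    rw [← pow_mul, mul_comm j n, pow_mul, hζ.pow_eq_one, one_pow]
  · intro a ha b hb hab
    exact hζ.injOn_pow ha hb hab
  · intro μ hμ
    obtain ⟨j, hj, rfl⟩ := hζ.eq_pow_of_pow_eq_one
      ((Polynomial.mem_nthRootsFinset hn (1:ℂ)).1 (Finset.mem_coe.1 hμ))
    exact ⟨j, by simpa using hj, rfl⟩
  · intros; rfl

lemma prod_range_shift (r : ℕ) (h : ℕ → ℂ) (hp : ∀ m, h (m + r) = h m)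
    (h0 : ∀ m, h m ≠ 0) (n : ℕ) :
    ∏ j ∈ Finset.range r, h (n + j) = ∏ j ∈ Finset.range r, h j := by
  induction n with
  | zero => simp
  | succ n ih =>
    have key : (∏ j ∈ Finset.range r, h (n + 1 + j)) * h n
        = (∏ j ∈ Finset.range r, h (n + j)) * h n := by
      calc (∏ j ∈ Finset.range r, h (n + 1 + j)) * h n
          = ∏ j ∈ Finset.range (r + 1), h (n + j) := by
            rw [Finset.prod_range_succ']
            refine congrArg₂ (· * ·) (Finset.prod_congr rfl fun j _ => by congr 1; omega) rfl
        _ = (∏ j ∈ Finset.range r, h (n + j)) * h (n + r) := Finset.prod_range_succ _ _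
        _ = (∏ j ∈ Finset.range r, h (n + j)) * h n := by rw [hp]
    exact (mul_right_cancel₀ (h0 n) key).trans ih

lemma norm_sphPt_add (z θ₁ θ₂ : ℝ) (hz0 : 0 ≤ z) (hz1 : z ≤ 1) :
    ‖sphPt z θ₁ + sphPt z θ₂‖
      = ‖(1 + z) + (1 - z) * Complex.exp ((θ₁ - θ₂ : ℝ) * Complex.I)‖ := by
  have hs : Real.sqrt (1 - z^2) ^ 2 = 1 - z^2 := Real.sq_sqrt (by nlinarith)
  have h1 : ‖sphPt z θ₁ + sphPt z θ₂‖^2 = 2 + 2*z^2 + 2*(1 - z^2) * Real.cos (θ₁ - θ₂) := by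
    rw [EuclideanSpace.norm_eq, Real.sq_sqrt (by positivity)]
    simp only [PiLp.add_apply, sphPt, PiLp.toLp_apply, Fin.sum_univ_three, Matrix.cons_val_zero,
      Matrix.cons_val_one, Matrix.head_cons, Matrix.cons_val_two, Matrix.tail_cons,
      Real.norm_eq_abs, sq_abs, Real.cos_sub]
    linear_combination ((Real.cos θ₁)^2+(Real.sin θ₁)^2+(Real.cos θ₂)^2+(Real.sin θ₂)^2
      + 2*(Real.cos θ₁*Real.cos θ₂ + Real.sin θ₁*Real.sin θ₂)) * hs
      + (1 - z^2) * (Real.sin_sq_add_cos_sq θ₁) + (1 - z^2) * (Real.sin_sq_add_cos_sq θ₂)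
  have hw : ((1 : ℂ) + z) + (1 - z) * Complex.exp ((θ₁ - θ₂ : ℝ) * Complex.I)
      = ((1 + z) + (1 - z)*Real.cos (θ₁ - θ₂) : ℝ) + ((1 - z)*Real.sin (θ₁ - θ₂) : ℝ) * Complex.I := by
    rw [Complex.exp_mul_I]
    push_cast
    ring
  have h2 : (‖(1 + z) + (1 - z) * Complex.exp ((θ₁ - θ₂ : ℝ) * Complex.I)‖)^2
      = 2 + 2*z^2 + 2*(1 - z^2) * Real.cos (θ₁ - θ₂) := by
    rw [hw, Complex.norm_add_mul_I, Real.sq_sqrt (by positivity)]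
    nlinarith [Real.sin_sq_add_cos_sq (θ₁ - θ₂)]
  rw [← Real.sqrt_sq (norm_nonneg _), h1, ← h2, Real.sqrt_sq (norm_nonneg _)]

lemma auxF_period (z : ℝ) (r : ℕ) (hr : r ≠ 0) (m : ℕ) :
    1 + (z:ℂ) + (1 - (z:ℂ)) * Complex.exp (2 * π * Complex.I / r) ^ (m + r)
    = 1 + (z:ℂ) + (1 - (z:ℂ)) * Complex.exp (2 * π * Complex.I / r) ^ m := by
  have hrC : (r:ℂ) ≠ 0 := Nat.cast_ne_zero.2 hr
  have hωr : Complex.exp (2 * π * Complex.I / r) ^ r = 1 := by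
    rw [← Complex.exp_nat_mul, show (r:ℂ) * (2 * π * Complex.I / r) = 2 * π * Complex.I from by
      field_simp]
    exact Complex.exp_two_pi_mul_I
  rw [pow_add, hωr, mul_one]

lemma auxF_abs_ge (z : ℝ) (hz0 : 0 < z) (hz1 : z < 1) (r : ℕ) (m : ℕ) :
    2 * z ≤ ‖1 + (z:ℂ) + (1 - (z:ℂ)) * Complex.exp (2 * π * Complex.I / r) ^ m‖ := by
  have habsω : ‖Complex.exp (2 * π * Complex.I / r) ^ m‖ = 1 := by
    rw [norm_pow, show (2 * ↑π * Complex.I / ↑r : ℂ) = ((2 * π / r : ℝ) : ℂ) * Complex.I from by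
      push_cast; ring, Complex.norm_exp_ofReal_mul_I, one_pow]
  have h3 := norm_add_le
    (1 + (z:ℂ) + (1 - (z:ℂ)) * Complex.exp (2 * π * Complex.I / r) ^ m)
    (-((1 - (z:ℂ)) * Complex.exp (2 * π * Complex.I / r) ^ m))
  rw [add_neg_cancel_right, norm_neg, norm_mul, habsω, mul_one] at h3
  have h4 : ‖1 + (z:ℂ)‖ = 1 + z := by
    rw [show (1 + (z:ℂ)) = ((1 + z : ℝ) : ℂ) from by push_cast; ring, Complex.norm_real, Real.norm_eq_abs,
      abs_of_pos (by linarith)]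
  have h5 : ‖1 - (z:ℂ)‖ = 1 - z := by
    rw [show (1 - (z:ℂ)) = ((1 - z : ℝ) : ℂ) from by push_cast; ring, Complex.norm_real, Real.norm_eq_abs,
      abs_of_pos (by linarith)]
  rw [h4, h5] at h3
  linarith

lemma auxF_ne (z : ℝ) (hz0 : 0 < z) (hz1 : z < 1) (r : ℕ) (m : ℕ) :
    1 + (z:ℂ) + (1 - (z:ℂ)) * Complex.exp (2 * π * Complex.I / r) ^ m ≠ 0 := by
  intro h
  have := auxF_abs_ge z hz0 hz1 r m
  rw [h, norm_zero] at this
  linarith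

lemma auxF_prod (z : ℝ) (hz0 : 0 < z) (hz1 : z < 1) (r : ℕ) (hr : 1 ≤ r) :
    ∏ j ∈ Finset.range r, (1 + (z:ℂ) + (1 - (z:ℂ)) * Complex.exp (2 * π * Complex.I / r) ^ j)
    = (((1 + z)^r - (z - 1)^r : ℝ) : ℂ) := by
  have hb : (1 - (z:ℂ)) ≠ 0 := by
    intro h
    have : (z:ℂ) = 1 := by linear_combination -h
    have : z = (1:ℝ) := by exact_mod_cast this
    linarith
  have key := prod_roots_unity r (by omega) (-(1 + (z:ℂ)) / (1 - (z:ℂ)))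
  calc ∏ j ∈ Finset.range r, (1 + (z:ℂ) + (1 - (z:ℂ)) * Complex.exp (2 * π * Complex.I / r) ^ j)
      = ∏ j ∈ Finset.range r, (-(1 - (z:ℂ))) *
          ((-(1 + (z:ℂ)) / (1 - (z:ℂ))) - Complex.exp (2 * π * Complex.I / r) ^ j) :=
        Finset.prod_congr rfl fun j _ => by field_simp; ring
    _ = (-(1 - (z:ℂ)))^r * ((-(1 + (z:ℂ)) / (1 - (z:ℂ)))^r - 1) := by
        rw [Finset.prod_mul_distrib, Finset.prod_const, Finset.card_range, key]
    _ = (1 + (z:ℂ))^r - (-(1 - (z:ℂ)))^r := by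
        rw [mul_sub, ← mul_pow, show (-(1 - (z:ℂ))) * (-(1 + (z:ℂ)) / (1 - (z:ℂ))) = 1 + (z:ℂ)
          from by field_simp]
        ring
    _ = (((1 + z)^r - (z - 1)^r : ℝ) : ℂ) := by push_cast; ring

lemma auxF_norm (z : ℝ) (hz0 : 0 < z) (hz1 : z < 1) (r : ℕ) (hr : 1 ≤ r) (i k : ℕ)
    (hk : k ∈ Finset.Icc 1 r) :
    ‖sphPt z (2*π*i / r) + sphPt z (2*π*k / r)‖
    = ‖1 + (z:ℂ) + (1 - (z:ℂ)) * Complex.exp (2 * π * Complex.I / r) ^ (i + (r - k))‖ := by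
  have hkr : k ≤ r := (Finset.mem_Icc.1 hk).2
  have hrC : (r:ℂ) ≠ 0 := Nat.cast_ne_zero.2 (by omega)
  rw [norm_sphPt_add z _ _ hz0.le hz1.le]
  congr 1
  rw [← Complex.exp_nat_mul]
  have hcast : ((i + (r - k) : ℕ) : ℂ) = (i : ℂ) + (r : ℂ) - (k : ℂ) := by
    rw [Nat.cast_add, Nat.cast_sub hkr]; ring
  rw [hcast]
  have hsplit : ((i:ℂ) + r - k) * (2 * ↑π * Complex.I / r)
      = ((2*π*i/r - 2*π*k/r : ℝ) : ℂ) * Complex.I + 2 * ↑π * Complex.I := by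
    push_cast
    field_simp
    ring
  rw [hsplit, Complex.exp_add, Complex.exp_two_pi_mul_I, mul_one]

/-- **Mutual energy of two antipodal parallels** (Lemma 4.1 of the paper).
If `x_1,…,x_r` are `r` equally spaced points on the parallel of height
`z ∈ (0,1)`, namely `x_i = (√(1-z²) cos(2πi/r), √(1-z²) sin(2πi/r), z)`, then
`-2 ∑_{i,k} log ‖x_i + x_k‖ = -2 r² log (1+z) - 2 r log (1 - ((z-1)/(z+1))^r)`. -/
theorem energy_antipodal_parallels
    (r : ℕ) (hr : 1 ≤ r) (z : ℝ) (hz0 : 0 < z) (hz1 : z < 1)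
    (x : ℕ → Esp) (hx : ∀ i, x i = sphPt z (2*π*i / r)) :
    -2 * ∑ i ∈ Finset.Icc 1 r, ∑ k ∈ Finset.Icc 1 r, Real.log ‖x i + x k‖
    = -2 * (r:ℝ)^2 * Real.log (1 + z)
      - 2 * (r:ℝ) * Real.log (1 - ((z - 1)/(z + 1))^r) := by
  have hC : 0 < (1 + z)^r - (z - 1)^r := by
    have h1 : (z - 1)^r ≤ (1 - z)^r := by
      calc (z - 1)^r ≤ |(z - 1)^r| := le_abs_self _
        _ = |z - 1|^r := by rw [abs_pow]
        _ = (1 - z)^r := by rw [abs_of_nonpos (by linarith)]; congr 1; ring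
    have h2 : (1 - z)^r < (1 + z)^r :=
      pow_lt_pow_left₀ (by linarith) (by linarith) (by omega)
    linarith
  have hD : 0 < 1 - ((z - 1)/(z + 1))^r := by
    have h1 : ((z - 1)/(z + 1))^r ≤ ((1 - z)/(z + 1))^r := by
      calc ((z - 1)/(z + 1))^r ≤ |((z - 1)/(z + 1))^r| := le_abs_self _
        _ = (|z - 1| / |z + 1|)^r := by rw [abs_pow, abs_div]
        _ = ((1 - z)/(z + 1))^r := by
            rw [abs_of_nonpos (by linarith), abs_of_pos (by linarith)]; congr 1; ring
    have h2 : ((1 - z)/(z + 1))^r < 1 :=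
      pow_lt_one₀ (div_nonneg (by linarith) (by linarith)) (by rw [div_lt_one (by linarith)]; linarith) (by omega)
    linarith
  -- inner sum
  have hinner : ∀ i : ℕ, ∑ k ∈ Finset.Icc 1 r, Real.log ‖x i + x k‖
      = Real.log ((1 + z)^r - (z - 1)^r) := by
    intro i
    have hsum : ∑ k ∈ Finset.Icc 1 r, Real.log ‖x i + x k‖
        = ∑ k ∈ Finset.Icc 1 r, Real.log (‖
            (1 + (z:ℂ) + (1 - (z:ℂ)) * Complex.exp (2 * π * Complex.I / r) ^ (i + (r - k)))‖) :=
      Finset.sum_congr rfl fun k hk => by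
        rw [hx i, hx k, auxF_norm z hz0 hz1 r hr i k hk]
    rw [hsum, ← Real.log_prod (fun k _ => by
      have := auxF_abs_ge z hz0 hz1 r (i + (r - k)); intro h; rw [h] at this; linarith)]
    have hre : ∏ k ∈ Finset.Icc 1 r, ‖
          (1 + (z:ℂ) + (1 - (z:ℂ)) * Complex.exp (2 * π * Complex.I / r) ^ (i + (r - k)))‖
        = ‖(∏ k ∈ Finset.Icc 1 r,
          (1 + (z:ℂ) + (1 - (z:ℂ)) * Complex.exp (2 * π * Complex.I / r) ^ (i + (r - k))))‖ :=
      (norm_prod _ _).symm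
    rw [hre]
    have hre2 : ∏ k ∈ Finset.Icc 1 r,
          (1 + (z:ℂ) + (1 - (z:ℂ)) * Complex.exp (2 * π * Complex.I / r) ^ (i + (r - k)))
        = ∏ j ∈ Finset.range r,
          (1 + (z:ℂ) + (1 - (z:ℂ)) * Complex.exp (2 * π * Complex.I / r) ^ j) := by
      rw [← Finset.Ico_add_one_right_eq_Icc, Finset.prod_Ico_eq_prod_range]
      norm_num
      have e1 : ∀ j ∈ Finset.range r,
          (1 + (z:ℂ) + (1 - (z:ℂ)) * Complex.exp (2 * π * Complex.I / r) ^ (i + (r - (1 + j))))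
          = (fun j => 1 + (z:ℂ) + (1 - (z:ℂ)) * Complex.exp (2 * π * Complex.I / r) ^ (i + j))
              (r - 1 - j) := by
        intro j _
        simp only
        have he : i + (r - (1 + j)) = i + (r - 1 - j) := by omega
        rw [he]
      rw [Finset.prod_congr rfl e1,
        Finset.prod_range_reflect (fun j => 1 + (z:ℂ) + (1 - (z:ℂ))
          * Complex.exp (2 * π * Complex.I / r) ^ (i + j)) r]
      exact prod_range_shift r
        (fun m => 1 + (z:ℂ) + (1 - (z:ℂ)) * Complex.exp (2 * π * Complex.I / r) ^ m)
        (auxF_period z r (Nat.one_le_iff_ne_zero.mp hr)) (auxF_ne z hz0 hz1 r) i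
    rw [hre2, auxF_prod z hz0 hz1 r hr, Complex.norm_real, Real.norm_eq_abs, abs_of_pos hC]
  have houter : ∑ i ∈ Finset.Icc 1 r, ∑ k ∈ Finset.Icc 1 r, Real.log ‖x i + x k‖
      = (r:ℝ) * Real.log ((1 + z)^r - (z - 1)^r) := by
    rw [Finset.sum_congr rfl fun i _ => hinner i, Finset.sum_const, Nat.card_Icc,
      Nat.add_sub_cancel, nsmul_eq_mul]
  have hlog : Real.log ((1 + z)^r - (z - 1)^r)
      = r * Real.log (1 + z) + Real.log (1 - ((z - 1)/(z + 1))^r) := by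
    have hfactor : (1 + z)^r - (z - 1)^r = (1 + z)^r * (1 - ((z - 1)/(z + 1))^r) := by
      have h10 : (z + 1 : ℝ) ≠ 0 := by linarith
      have h11 : (1 + z : ℝ) ≠ 0 := by linarith
      rw [div_pow, add_comm z 1, mul_sub, mul_one, mul_div_cancel₀ _ (pow_ne_zero r h11)]
    rw [hfactor, Real.log_mul (pow_ne_zero _ (by linarith)) (ne_of_gt hD), Real.log_pow]
  rw [houter, hlog]
  ring
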